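/- Pairwise sub-demixing update: let V₁, V₂ ∈ ℂ^{M×M} be Hermitian positive definite, W̄₃, …, W̄_L fixed full-column-rank blocks, and X ∈ ℂ^{M×(d₁+d₂)} full rank with Xᴴ [W̄₃ ⋯ W̄_L] = 0. Set P_ℓ = V_ℓ⁻¹ X and Ṽ_ℓ = P_ℓᴴ V_ℓ P_ℓ for ℓ = 1, 2. If (Ū₁, Ū₂) solves the two-subspace problem for the matrices Ṽ₁⁻¹, Ṽ₂⁻¹ (i.e., Ū_ℓᴴ Ṽ_ℓ⁻¹ Ū_ℓ = B_ℓ and Ū₂ᴴ Ṽ₁⁻¹ Ū₁ = Ū₁ᴴ Ṽ₂⁻¹ Ū₂ = 0), then W̄_ℓ = P_ℓ Ṽ_ℓ⁻¹ Ū_ℓ, ℓ = 1, 2, satisfies the stationarity conditions W̄_ℓᴴ V_ℓ W̄_ℓ = B_ℓ, W̄₂ᴴ V₁ W̄₁ = 0, W̄₁ᴴ V₂ W̄₂ = 0, and W̄_{ℓ'}ᴴ V_ℓ W̄_ℓ = 0 for ℓ = 1,2 and ℓ' ≥ 3. -/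

import Mathlib

open Matrix ComplexOrder

lemma mulVec_injective_of_rank_eq_card' {m n : Type*} [Fintype m] [Fintype n] [DecidableEq n]
    {X : Matrix m n ℂ} (h : X.rank = Fintype.card n) :
    Function.Injective X.mulVec := by
  rw [← coe_mulVecLin, ← LinearMap.ker_eq_bot]
  have h2 := X.mulVecLin.finrank_range_add_finrank_ker
  rw [Matrix.rank] at h
  rw [h, Module.finrank_fintype_fun_eq_card] at h2
  have : Module.finrank ℂ (LinearMap.ker X.mulVecLin) = 0 := by omega
  exact Submodule.finrank_eq_zero.mp this

lemma posDef_conjTranspose_mul_mul' {m n : Type*} [Fintype m] [Fintype n]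
    {A : Matrix m m ℂ} (hA : A.PosDef) {X : Matrix m n ℂ}
    (hX : Function.Injective X.mulVec) : (Xᴴ * A * X).PosDef := by
  refine PosDef.of_dotProduct_mulVec_pos (isHermitian_conjTranspose_mul_mul X hA.1) fun x hx => ?_
  have h1 : X *ᵥ x ≠ 0 := fun h => hx (hX (by simpa using h))
  have h2 := hA.dotProduct_mulVec_pos h1
  rw [← Matrix.mulVec_mulVec, ← Matrix.mulVec_mulVec, dotProduct_mulVec, ← star_mulVec]
  exact h2

/-- Pairwise sub-demixing update (Theorem 3, stationarity part).
`Wt` collects the fixed blocks `W̄₃, …, W̄_L`.  With `P_ℓ = V_ℓ⁻¹ X`,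
`Ṽ_ℓ = Xᴴ V_ℓ⁻¹ X`, if `(Ū₁, Ū₂)` solves the two-subspace problem for
`(Ṽ₁⁻¹, Ṽ₂⁻¹)`, then `W̄_ℓ = P_ℓ Ṽ_ℓ⁻¹ Ū_ℓ` satisfies the stationarity
conditions `W̄_ℓᴴ V_ℓ W̄_ℓ = B_ℓ`, `W̄₂ᴴ V₁ W̄₁ = 0`, `W̄₁ᴴ V₂ W̄₂ = 0`, and
`Wtᴴ V_ℓ W̄_ℓ = 0` (orthogonality against every fixed block). -/
theorem jisa_pairwise_update_stationarity {d₁ d₂ e : ℕ}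
    (V₁ V₂ : Matrix ((Fin d₁ ⊕ Fin d₂) ⊕ Fin e) ((Fin d₁ ⊕ Fin d₂) ⊕ Fin e) ℂ)
    (hV₁ : V₁.PosDef) (hV₂ : V₂.PosDef)
    (Wt : Matrix ((Fin d₁ ⊕ Fin d₂) ⊕ Fin e) (Fin e) ℂ) (hWtrank : Wt.rank = e)
    (X : Matrix ((Fin d₁ ⊕ Fin d₂) ⊕ Fin e) (Fin d₁ ⊕ Fin d₂) ℂ)
    (hXrank : X.rank = d₁ + d₂) (hXnull : Xᴴ * Wt = 0)
    (B₁ : Matrix (Fin d₁) (Fin d₁) ℂ) (hB₁ : B₁.PosDef)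
    (B₂ : Matrix (Fin d₂) (Fin d₂) ℂ) (hB₂ : B₂.PosDef)
    (Ubar₁ : Matrix (Fin d₁ ⊕ Fin d₂) (Fin d₁) ℂ)
    (Ubar₂ : Matrix (Fin d₁ ⊕ Fin d₂) (Fin d₂) ℂ)
    -- `(Ū₁, Ū₂)` solves the two-subspace problem for `(Ṽ₁⁻¹, Ṽ₂⁻¹)`
    (hU₁fit : Ubar₁ᴴ * (Xᴴ * V₁⁻¹ * X)⁻¹ * Ubar₁ = B₁)
    (hU₂fit : Ubar₂ᴴ * (Xᴴ * V₂⁻¹ * X)⁻¹ * Ubar₂ = B₂)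
    (hUcross₁ : Ubar₂ᴴ * (Xᴴ * V₁⁻¹ * X)⁻¹ * Ubar₁ = 0)
    (hUcross₂ : Ubar₁ᴴ * (Xᴴ * V₂⁻¹ * X)⁻¹ * Ubar₂ = 0) :
    let W₁ := V₁⁻¹ * X * (Xᴴ * V₁⁻¹ * X)⁻¹ * Ubar₁
    let W₂ := V₂⁻¹ * X * (Xᴴ * V₂⁻¹ * X)⁻¹ * Ubar₂
    W₁ᴴ * V₁ * W₁ = B₁ ∧ W₂ᴴ * V₂ * W₂ = B₂ ∧
      W₂ᴴ * V₁ * W₁ = 0 ∧ W₁ᴴ * V₂ * W₂ = 0 ∧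
      Wtᴴ * V₁ * W₁ = 0 ∧ Wtᴴ * V₂ * W₂ = 0 := by
  intro W₁ W₂
  have hXinj : Function.Injective X.mulVec := by
    apply mulVec_injective_of_rank_eq_card'
    simp [hXrank]
  have hT₁ : (Xᴴ * V₁⁻¹ * X).PosDef := posDef_conjTranspose_mul_mul' hV₁.inv hXinj
  have hT₂ : (Xᴴ * V₂⁻¹ * X).PosDef := posDef_conjTranspose_mul_mul' hV₂.inv hXinj
  haveI := hV₁.isUnit.invertible
  haveI := hV₂.isUnit.invertible
  haveI := hT₁.isUnit.invertible
  haveI := hT₂.isUnit.invertible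
  have hWX : Wtᴴ * X = 0 := by
    have := congrArg conjTranspose hXnull
    simpa using this
  have assoc₁ : Xᴴ * V₁⁻¹ * X = Xᴴ * (V₁⁻¹ * X) := Matrix.mul_assoc _ _ _
  have assoc₂ : Xᴴ * V₂⁻¹ * X = Xᴴ * (V₂⁻¹ * X) := Matrix.mul_assoc _ _ _
  haveI : Invertible (Xᴴ * (V₁⁻¹ * X)) := assoc₁ ▸ hT₁.isUnit.invertible
  haveI : Invertible (Xᴴ * (V₂⁻¹ * X)) := assoc₂ ▸ hT₂.isUnit.invertible
  have hH₁ : (Xᴴ * (V₁⁻¹ * X))⁻¹ᴴ = (Xᴴ * (V₁⁻¹ * X))⁻¹ := by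
    rw [← assoc₁]; exact hT₁.isHermitian.inv
  have hH₂ : (Xᴴ * (V₂⁻¹ * X))⁻¹ᴴ = (Xᴴ * (V₂⁻¹ * X))⁻¹ := by
    rw [← assoc₂]; exact hT₂.isHermitian.inv
  have hr₁ : ∀ (p : Type) [Fintype p], ∀ Z : Matrix (Fin d₁ ⊕ Fin d₂) p ℂ,
      Xᴴ * (V₁⁻¹ * (X * Z)) = (Xᴴ * (V₁⁻¹ * X)) * Z := by
    intro p _ Z; simp [Matrix.mul_assoc]
  have hr₂ : ∀ (p : Type) [Fintype p], ∀ Z : Matrix (Fin d₁ ⊕ Fin d₂) p ℂ,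
      Xᴴ * (V₂⁻¹ * (X * Z)) = (Xᴴ * (V₂⁻¹ * X)) * Z := by
    intro p _ Z; simp [Matrix.mul_assoc]
  refine ⟨?_, ?_, ?_, ?_, ?_, ?_⟩
  · rw [← hU₁fit]
    simp only [W₁, conjTranspose_mul, conjTranspose_conjTranspose,
      hV₁.isHermitian.inv.eq, hH₁, Matrix.mul_assoc,
      inv_mul_cancel_left_of_invertible, mul_inv_cancel_left_of_invertible]
    rw [hr₁, inv_mul_cancel_left_of_invertible]
  · rw [← hU₂fit]
    simp only [W₂, conjTranspose_mul, conjTranspose_conjTranspose,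
      hV₂.isHermitian.inv.eq, hH₂, Matrix.mul_assoc,
      inv_mul_cancel_left_of_invertible, mul_inv_cancel_left_of_invertible]
    rw [hr₂, inv_mul_cancel_left_of_invertible]
  · rw [← hUcross₁]
    simp only [W₁, W₂, conjTranspose_mul, conjTranspose_conjTranspose,
      hV₂.isHermitian.inv.eq, hH₂, Matrix.mul_assoc,
      inv_mul_cancel_left_of_invertible, mul_inv_cancel_left_of_invertible]
    rw [hr₂, inv_mul_cancel_left_of_invertible]
  · rw [← hUcross₂]
    simp only [W₁, W₂, conjTranspose_mul, conjTranspose_conjTranspose,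
      hV₁.isHermitian.inv.eq, hH₁, Matrix.mul_assoc,
      inv_mul_cancel_left_of_invertible, mul_inv_cancel_left_of_invertible]
    rw [hr₁, inv_mul_cancel_left_of_invertible]
  · simp only [W₁, Matrix.mul_assoc, mul_inv_cancel_left_of_invertible]
    rw [← Matrix.mul_assoc, hWX, Matrix.zero_mul]
  · simp only [W₂, Matrix.mul_assoc, mul_inv_cancel_left_of_invertible]
    rw [← Matrix.mul_assoc, hWX, Matrix.zero_mul]
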